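/- Fix ω ∈ ℂ ∖ ℝ_{≤0} and η ∈ ℂ. There exist real constants k > 0 and δ > 0 such that for every w ∈ ℂ ∖ ℝ_{≤0} with 0 < |w| < δ and with (w+η)/ω not a nonpositive integer, one has |w|^k < |Λ(w,η|ω)| < |w|^{−k}. -/

import Mathlib

open Complex Filter Topology Finset

/-- The modified gamma function
`Λ(w,η|ω) = (2π)^{−1/2} · Γ((w+η)/ω) · exp(w/ω) · exp((1/2 − (w+η)/ω)·(Log w − Log ω))`,
where `Log` is the principal branch of the logarithm. -/
noncomputable def Lambda (w η ω : ℂ) : ℂ :=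
  (Real.sqrt (2 * Real.pi) : ℂ)⁻¹ * Complex.Gamma ((w + η) / ω) * Complex.exp (w / ω) *
    Complex.exp ((1 / 2 - (w + η) / ω) * (Complex.log w - Complex.log ω))

lemma gamma_prod_aux (z : ℂ) (hz : ∀ m : ℕ, z ≠ -(m : ℂ)) (n : ℕ) :
    Complex.Gamma (z + n + 1) = (∏ j ∈ Finset.range (n + 1), (z + j)) * Complex.Gamma z := by
  induction n with
  | zero =>
    have h0 : z ≠ 0 := by simpa using hz 0
    simp [Complex.Gamma_add_one z h0]
  | succ n ih =>
    have h1 : z + (↑(n + 1) : ℂ) + 1 = (z + n + 1) + 1 := by push_cast; ring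
    have h2 : z + (n : ℂ) + 1 ≠ 0 := by
      intro h
      exact hz (n + 1) (by push_cast; linear_combination h)
    rw [h1, Complex.Gamma_add_one _ h2, ih, Finset.prod_range_succ _ (n + 1)]
    push_cast
    ring

lemma one_ne_neg_nat : ∀ m : ℕ, (1 : ℂ) ≠ -(m : ℂ) := by
  intro m h
  have : (1 : ℝ) = -(m : ℝ) := by exact_mod_cast congrArg Complex.re h
  nlinarith [Nat.cast_nonneg (α := ℝ) m]

lemma gammaLogBound (ω : ℂ) (hω0 : ω ≠ 0) (η : ℂ) :
    ∃ C : ℝ, ∀ᶠ w : ℂ in 𝓝 0, w ≠ 0 → (∀ n : ℕ, (w + η) / ω ≠ -(n : ℂ)) →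
      |Real.log ‖Complex.Gamma ((w + η) / ω)‖| ≤ C + |Real.log ‖w‖| := by
  have hzc : ContinuousAt (fun w : ℂ => (w + η) / ω) 0 := by fun_prop
  have hz0 : (fun w : ℂ => (w + η) / ω) 0 = η / ω := by simp
  by_cases hp : ∃ n : ℕ, η / ω = -(n : ℂ)
  · -- pole case
    obtain ⟨n, hn⟩ := hp
    have hη : η = -((n : ℂ) * ω) := by
      field_simp at hn; linear_combination hn
    set f : ℂ → ℝ := fun w => |Real.log ‖Complex.Gamma ((w + η) / ω + n + 1)‖|
      + ∑ j ∈ Finset.range n, |Real.log ‖(w + η) / ω + j‖| + |Real.log ‖ω‖| with hf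
    have hval : ((0 : ℂ) + η) / ω + n + 1 = 1 := by
      rw [zero_add, hn]; ring
    have hΓ1 : ContinuousAt (fun w : ℂ => |Real.log ‖Complex.Gamma ((w + η) / ω + n + 1)‖|) 0 := by
      have hc2 : ContinuousAt (fun w : ℂ => (w + η) / ω + n + 1) 0 := by fun_prop
      have hΓc : ContinuousAt Complex.Gamma (((0 : ℂ) + η) / ω + n + 1) := by
        rw [hval]
        exact (Complex.differentiableAt_Gamma _ one_ne_neg_nat).continuousAt
      have hB : ContinuousAt (fun w : ℂ => Complex.Gamma ((w + η) / ω + n + 1)) 0 :=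
        ContinuousAt.comp hΓc hc2
      have hne1 : ‖Complex.Gamma (((0 : ℂ) + η) / ω + n + 1)‖ ≠ 0 := by
        rw [hval]; simp [Complex.Gamma_one]
      exact (hB.norm.log hne1).abs
    have hsum : ContinuousAt
        (fun w : ℂ => ∑ j ∈ Finset.range n, |Real.log ‖(w + η) / ω + j‖|) 0 := by
      apply tendsto_finset_sum
      intro j hj
      have hjn : (j : ℕ) < n := Finset.mem_range.mp hj
      have hval : (fun w : ℂ => (w + η) / ω + j) 0 = -(n : ℂ) + j := by
        simp only
        rw [zero_add, hn]
      have hne : (-(n : ℂ) + j) ≠ 0 := by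
        intro h
        have : (n : ℂ) = (j : ℂ) := by linear_combination -h
        have : (n : ℕ) = j := by exact_mod_cast this
        omega
      have hc2 : ContinuousAt (fun w : ℂ => (w + η) / ω + j) 0 := by fun_prop
      have hne2 : ‖((0 : ℂ) + η) / ω + j‖ ≠ 0 := by
        rw [zero_add, hn]; simpa using hne
      exact ((hc2.norm.log hne2).abs).tendsto
    have hfc : ContinuousAt f 0 := by
      apply ContinuousAt.add
      · exact hΓ1.add hsum
      · exact continuousAt_const
    have hev : ∀ᶠ w : ℂ in 𝓝 0, f w < f 0 + 1 :=
      hfc.tendsto.eventually_lt_const (lt_add_one _)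
    refine ⟨f 0 + 1, ?_⟩
    filter_upwards [hev] with w hfw hw hne
    -- pointwise identity
    have hzj : ∀ j : ℕ, (w + η) / ω + (j : ℂ) ≠ 0 := by
      intro j h
      exact hne j (eq_neg_of_add_eq_zero_left h)
    have hΓz : Complex.Gamma ((w + η) / ω) ≠ 0 := Complex.Gamma_ne_zero hne
    have hid := gamma_prod_aux ((w + η) / ω) hne n
    have h1 : ‖Complex.Gamma ((w + η) / ω + n + 1)‖
        = (∏ j ∈ Finset.range (n + 1), ‖(w + η) / ω + (j : ℂ)‖) * ‖Complex.Gamma ((w + η) / ω)‖ := by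
      rw [hid, norm_mul, norm_prod]
    have hlog1 : Real.log ‖Complex.Gamma ((w + η) / ω + n + 1)‖
        = (∑ j ∈ Finset.range (n + 1), Real.log ‖(w + η) / ω + (j : ℂ)‖)
          + Real.log ‖Complex.Gamma ((w + η) / ω)‖ := by
      rw [h1, Real.log_mul, Real.log_prod]
      · intro j hj
        simpa using hzj j
      · apply Finset.prod_ne_zero_iff.mpr
        intro j hj
        simpa using hzj j
      · simpa using hΓz
    have hzn : (w + η) / ω + (n : ℂ) = w / ω := by
      rw [hη]
      field_simp
      ring
    have hlogzn : Real.log ‖(w + η) / ω + (n : ℂ)‖ = Real.log ‖w‖ - Real.log ‖ω‖ := by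
      rw [hzn, norm_div, Real.log_div (by simpa using hw) (by simpa using hω0)]
    rw [Finset.sum_range_succ, hlogzn] at hlog1
    have key : Real.log ‖Complex.Gamma ((w + η) / ω)‖
        = Real.log ‖Complex.Gamma ((w + η) / ω + n + 1)‖
          - (∑ j ∈ Finset.range n, Real.log ‖(w + η) / ω + (j : ℂ)‖)
          - Real.log ‖w‖ + Real.log ‖ω‖ := by linarith
    have hsumabs : |∑ j ∈ Finset.range n, Real.log ‖(w + η) / ω + (j : ℂ)‖|
        ≤ ∑ j ∈ Finset.range n, |Real.log ‖(w + η) / ω + (j : ℂ)‖| :=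
      Finset.abs_sum_le_sum_abs _ _
    have hstep : |Real.log ‖Complex.Gamma ((w + η) / ω)‖| ≤ f w + |Real.log ‖w‖| := by
      set a := Real.log ‖Complex.Gamma ((w + η) / ω + n + 1)‖ with ha
      set sS := ∑ j ∈ Finset.range n, Real.log ‖(w + η) / ω + (j : ℂ)‖ with hsS
      set lw := Real.log ‖w‖ with hlw
      set lo := Real.log ‖ω‖ with hlo
      have h4 : |a - sS - lw + lo| ≤ |a| + |sS| + |lw| + |lo| := by
        have h1 : |a - sS - lw + lo| ≤ |a - sS - lw| + |lo| := abs_add_le _ _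
        have h2 : |a - sS - lw| ≤ |a - sS| + |lw| := by
          simpa [sub_eq_add_neg] using abs_add_le (a - sS) (-lw)
        have h3 : |a - sS| ≤ |a| + |sS| := by
          simpa [sub_eq_add_neg] using abs_add_le a (-sS)
        linarith
      rw [key]
      have hfw' : f w = |a| + (∑ j ∈ Finset.range n, |Real.log ‖(w + η) / ω + (j : ℂ)‖|) + |lo| := rfl
      have : |sS| ≤ ∑ j ∈ Finset.range n, |Real.log ‖(w + η) / ω + (j : ℂ)‖| := hsumabs
      rw [hfw']
      linarith
    calc |Real.log ‖Complex.Gamma ((w + η) / ω)‖| ≤ f w + |Real.log ‖w‖| := hstep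
      _ ≤ (f 0 + 1) + |Real.log ‖w‖| := by linarith
  · -- no pole
    push_neg at hp
    have hΓ : ContinuousAt Complex.Gamma (η / ω) :=
      (Complex.differentiableAt_Gamma _ hp).continuousAt
    have hΓne : Complex.Gamma (η / ω) ≠ 0 := Complex.Gamma_ne_zero hp
    have hcont : ContinuousAt (fun w : ℂ => |Real.log ‖Complex.Gamma ((w + η) / ω)‖|) 0 := by
      have hΓ' : ContinuousAt Complex.Gamma (((0 : ℂ) + η) / ω) := by
        rw [zero_add]; exact hΓ
      have hB : ContinuousAt (fun w : ℂ => Complex.Gamma ((w + η) / ω)) 0 :=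
        ContinuousAt.comp hΓ' hzc
      have hne1 : ‖Complex.Gamma (((0 : ℂ) + η) / ω)‖ ≠ 0 := by
        rw [zero_add]; simpa using hΓne
      exact (hB.norm.log hne1).abs
    have hev : ∀ᶠ w : ℂ in 𝓝 0,
        |Real.log ‖Complex.Gamma ((w + η) / ω)‖| <
          |Real.log ‖Complex.Gamma ((0 + η) / ω)‖| + 1 :=
      hcont.tendsto.eventually_lt_const (lt_add_one _)
    refine ⟨|Real.log ‖Complex.Gamma ((0 + η) / ω)‖| + 1, ?_⟩
    filter_upwards [hev] with w hw _ _
    have := abs_nonneg (Real.log ‖w‖)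
    linarith

/-- Fix `ω ∈ ℂ ∖ ℝ_{≤0}` and `η ∈ ℂ`.  There exist real constants
`k > 0` and `δ > 0` such that for every `w ∈ ℂ ∖ ℝ_{≤0}` with `0 < |w| < δ` and with
`(w+η)/ω` not a nonpositive integer, one has `|w|^k < |Λ(w,η|ω)| < |w|^{−k}`. -/
theorem lambda_bounded_near_zero (ω : ℂ) (hω : ω ∈ Complex.slitPlane) (η : ℂ) :
    ∃ k : ℝ, 0 < k ∧ ∃ δ : ℝ, 0 < δ ∧
      ∀ w : ℂ, w ∈ Complex.slitPlane → 0 < ‖w‖ → ‖w‖ < δ →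
        (∀ n : ℕ, (w + η) / ω ≠ -(n : ℂ)) →
          ‖w‖ ^ k < ‖Lambda w η ω‖ ∧ ‖Lambda w η ω‖ < ‖w‖ ^ (-k) := by
  have hω0 : ω ≠ 0 := Complex.slitPlane_ne_zero hω
  obtain ⟨C, hC⟩ := gammaLogBound ω hω0 η
  set B : ℝ := ‖(1 : ℂ) / 2 - η / ω‖ + 1 with hB
  have hB0 : 0 < B := by positivity
  have h1 : ∀ᶠ w : ℂ in 𝓝 0, |((w / ω).re)| ≤ 1 := by
    have hc : ContinuousAt (fun w : ℂ => |((w / ω).re)|) 0 := by fun_prop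
    have hlt : |(((0 : ℂ) / ω).re)| < 1 := by simp
    exact (hc.tendsto.eventually_lt_const hlt).mono fun w hw => hw.le
  have h2 : ∀ᶠ w : ℂ in 𝓝 0, ‖(1 : ℂ) / 2 - (w + η) / ω‖ ≤ B := by
    have hc : ContinuousAt (fun w : ℂ => ‖(1 : ℂ) / 2 - (w + η) / ω‖) 0 := by fun_prop
    have hlt : ‖(1 : ℂ) / 2 - ((0 : ℂ) + η) / ω‖ < B := by
      rw [hB, zero_add]; exact lt_add_one _
    exact (hc.tendsto.eventually_lt_const hlt).mono fun w hw => hw.le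
  obtain ⟨δ₁, hδ₁pos, hδ₁⟩ := Metric.eventually_nhds_iff.mp (hC.and (h1.and h2))
  set c₀ : ℝ := |Real.log (Real.sqrt (2 * Real.pi))| with hc₀
  set C₂ : ℝ := c₀ + C + 1 + B * (Real.pi + ‖Complex.log ω‖) with hC₂
  set M : ℝ := max C₂ 1 with hM
  refine ⟨B + 3, by positivity, min δ₁ (Real.exp (-(M + 1))),
    lt_min hδ₁pos (Real.exp_pos _), ?_⟩
  intro w hslit hw0 hwδ hne
  have hw : w ≠ 0 := norm_pos_iff.mp hw0
  have hd : dist w 0 < δ₁ := by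
    rw [dist_zero_right]; exact lt_of_lt_of_le hwδ (min_le_left _ _)
  obtain ⟨hΓb, hre, hzb⟩ := hδ₁ hd
  have hΓb := hΓb hw hne
  set L : ℝ := -Real.log ‖w‖ with hLdef
  have hL : M + 1 < L := by
    have h : ‖w‖ < Real.exp (-(M + 1)) := lt_of_lt_of_le hwδ (min_le_right _ _)
    have h' := Real.log_lt_log hw0 h
    rw [Real.log_exp] at h'
    rw [hLdef]; linarith
  have hM1 : (1 : ℝ) ≤ M := le_max_right _ _
  have hMC : C₂ ≤ M := le_max_left _ _
  have hL1 : 1 < L := by linarith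
  have hwlog : Real.log ‖w‖ = -L := by rw [hLdef]; ring
  have habs : |Real.log ‖w‖| = L := by rw [hwlog, abs_neg, abs_of_pos (by linarith)]
  have hΓne : Complex.Gamma ((w + η) / ω) ≠ 0 := by
    rw [Ne, Complex.Gamma_eq_zero_iff]
    push_neg
    exact hne
  have hΓnormpos : 0 < ‖Complex.Gamma ((w + η) / ω)‖ := norm_pos_iff.mpr hΓne
  have hsqrt : (0 : ℝ) < Real.sqrt (2 * Real.pi) := Real.sqrt_pos.mpr (by positivity)
  have hΛne : Lambda w η ω ≠ 0 := by
    unfold Lambda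
    apply mul_ne_zero (mul_ne_zero (mul_ne_zero ?_ hΓne) (Complex.exp_ne_zero _))
      (Complex.exp_ne_zero _)
    exact inv_ne_zero (by exact_mod_cast hsqrt.ne')
  have hΛpos : 0 < ‖Lambda w η ω‖ := norm_pos_iff.mpr hΛne
  have hΛnorm : ‖Lambda w η ω‖ = (Real.sqrt (2 * Real.pi))⁻¹
      * ‖Complex.Gamma ((w + η) / ω)‖ * Real.exp ((w / ω).re)
      * Real.exp ((((1 : ℂ) / 2 - (w + η) / ω) * (Complex.log w - Complex.log ω)).re) := by
    unfold Lambda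
    rw [norm_mul, norm_mul, norm_mul, norm_inv,
      Complex.norm_exp, Complex.norm_exp,
      Complex.norm_real, Real.norm_eq_abs, abs_of_pos hsqrt]
  have hΛlog : Real.log ‖Lambda w η ω‖ = -Real.log (Real.sqrt (2 * Real.pi))
      + Real.log ‖Complex.Gamma ((w + η) / ω)‖ + (w / ω).re
      + ((((1 : ℂ) / 2 - (w + η) / ω) * (Complex.log w - Complex.log ω)).re) := by
    rw [hΛnorm]
    rw [Real.log_mul
        (mul_ne_zero (mul_ne_zero (inv_ne_zero hsqrt.ne') hΓnormpos.ne')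
          (Real.exp_pos _).ne') (Real.exp_pos _).ne',
      Real.log_mul (mul_ne_zero (inv_ne_zero hsqrt.ne') hΓnormpos.ne')
        (Real.exp_pos _).ne',
      Real.log_mul (inv_ne_zero hsqrt.ne') hΓnormpos.ne',
      Real.log_exp, Real.log_exp, Real.log_inv]
  have e2 : ‖Complex.log w‖ ≤ L + Real.pi := by
    have h := Complex.norm_le_abs_re_add_abs_im (Complex.log w)
    rw [Complex.log_re, Complex.log_im] at h
    have harg := Complex.abs_arg_le_pi w
    rw [habs] at h
    linarith
  have e3 : |((((1 : ℂ) / 2 - (w + η) / ω) * (Complex.log w - Complex.log ω)).re)|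
      ≤ B * (L + Real.pi + ‖Complex.log ω‖) := by
    have h := Complex.abs_re_le_norm
      (((1 : ℂ) / 2 - (w + η) / ω) * (Complex.log w - Complex.log ω))
    rw [norm_mul] at h
    have hsub : ‖Complex.log w - Complex.log ω‖ ≤ (L + Real.pi) + ‖Complex.log ω‖ :=
      le_trans (norm_sub_le _ _) (by linarith)
    calc |((((1 : ℂ) / 2 - (w + η) / ω) * (Complex.log w - Complex.log ω)).re)|
        ≤ ‖(1 : ℂ) / 2 - (w + η) / ω‖ * ‖Complex.log w - Complex.log ω‖ := h
      _ ≤ B * (L + Real.pi + ‖Complex.log ω‖) := by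
          apply mul_le_mul hzb (by linarith) (norm_nonneg _) hB0.le
  have hbound : |Real.log ‖Lambda w η ω‖| < (B + 3) * L := by
    rw [hΛlog]
    have tri : ∀ x1 x2 x3 x4 : ℝ, |x1 + x2 + x3 + x4| ≤ |x1| + |x2| + |x3| + |x4| := by
      intro x1 x2 x3 x4
      calc |x1 + x2 + x3 + x4| ≤ |x1 + x2 + x3| + |x4| := abs_add_le _ _
        _ ≤ (|x1 + x2| + |x3|) + |x4| := by linarith [abs_add_le (x1 + x2) x3]
        _ ≤ |x1| + |x2| + |x3| + |x4| := by linarith [abs_add_le x1 x2]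
    have htri := tri (-Real.log (Real.sqrt (2 * Real.pi)))
      (Real.log ‖Complex.Gamma ((w + η) / ω)‖) ((w / ω).re)
      ((((1 : ℂ) / 2 - (w + η) / ω) * (Complex.log w - Complex.log ω)).re)
    have t0 : |(-Real.log (Real.sqrt (2 * Real.pi)))| = c₀ := by rw [abs_neg]
    have hΓb' : |Real.log ‖Complex.Gamma ((w + η) / ω)‖| ≤ C + L := by rwa [habs] at hΓb
    have hCL : C₂ < L := by linarith
    have hexp1 : B * (L + Real.pi + ‖Complex.log ω‖)
        = B * (Real.pi + ‖Complex.log ω‖) + B * L := by ring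
    have hexp2 : (B + 3) * L = B * L + 3 * L := by ring
    rw [t0] at htri
    have hL0 : 0 < L := by linarith
    clear_value B c₀ C₂ M L
    linarith [htri, hΓb', hre, e3, hCL, hexp1, hexp2, hC₂]
  have habs2 := abs_lt.mp hbound
  constructor
  · have hlt : Real.log ‖w‖ * (B + 3) < Real.log ‖Lambda w η ω‖ := by
      have heq : Real.log ‖w‖ * (B + 3) = -((B + 3) * L) := by rw [hwlog]; ring
      rw [heq]; exact habs2.1
    calc ‖w‖ ^ (B + 3) = Real.exp (Real.log ‖w‖ * (B + 3)) := Real.rpow_def_of_pos hw0 _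
      _ < Real.exp (Real.log ‖Lambda w η ω‖) := Real.exp_lt_exp.mpr hlt
      _ = ‖Lambda w η ω‖ := Real.exp_log hΛpos
  · have hlt : Real.log ‖Lambda w η ω‖ < Real.log ‖w‖ * (-(B + 3)) := by
      have heq : Real.log ‖w‖ * (-(B + 3)) = (B + 3) * L := by rw [hwlog]; ring
      rw [heq]; exact habs2.2
    calc ‖Lambda w η ω‖ = Real.exp (Real.log ‖Lambda w η ω‖) := (Real.exp_log hΛpos).symm
      _ < Real.exp (Real.log ‖w‖ * (-(B + 3))) := Real.exp_lt_exp.mpr hlt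
      _ = ‖w‖ ^ (-(B + 3)) := (Real.rpow_def_of_pos hw0 _).symm
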